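/- Let S be a consistent queryless schedule and T a basic input tree of S. Then S[T] is defined, the edge set of S[T] equals (E(T) ∪ ADD(S)) − DEL(S), and S[T] is a basic output tree of S. -/

import Mathlib

attribute [local instance] Classical.propDecidable

/-! ## Data model: nodes, labels, edges, document trees -/

abbrev Node := ℕ
abbrev Label := ℕ
abbrev Edge := Node × Label × Node

/-- A candidate document tree: a finite node set, a finite edge set, a root. -/
structure Tree3 where
  N : Finset Node
  E : Finset Edge
  root : Node

/-- The edge-step relation of a set of labelled edges. -/
def estep (E : Set Edge) (a b : Node) : Prop := ∃ l : Label, (a, l, b) ∈ E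

/-- `T` is a document tree: the root is a node, edges connect nodes, every node has at
most one incoming edge, the root has none, and every node is reachable from the root
(edges are directed from parent to child). -/
def IsDT (T : Tree3) : Prop :=
  T.root ∈ T.N ∧
  (∀ e ∈ T.E, e.1 ∈ T.N ∧ e.2.2 ∈ T.N) ∧
  (∀ e ∈ T.E, ∀ e' ∈ T.E, e.2.2 = e'.2.2 → e = e') ∧
  (∀ e ∈ T.E, e.2.2 ≠ T.root) ∧
  (∀ n ∈ T.N, Relation.ReflTransGen (estep (↑T.E)) T.root n)

/-! ## Update operations and queryless schedules -/

inductive Op where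
  | add : Node → Label → Node → Op
  | del : Node → Label → Node → Op
deriving DecidableEq

/-- Apply an update operation to a tree; `none` when the operation is undefined. -/
noncomputable def applyOp (o : Op) (T : Tree3) : Option Tree3 :=
  match o with
  | Op.add m l n =>
      let T' : Tree3 := ⟨insert n T.N, insert (m, l, n) T.E, T.root⟩
      if (m, l, n) ∈ T.E ∨ ¬ IsDT T' then none else some T'
  | Op.del m l n =>
      let T' : Tree3 := ⟨T.N.erase n, T.E.erase (m, l, n), T.root⟩
      if (m, l, n) ∉ T.E ∨ ¬ IsDT T' then none else some T'

/-- An action is an operation tagged with a transaction identifier. -/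
abbrev QLAction := Op × ℕ

/-- A queryless (QL) schedule is a finite sequence of actions. -/
abbrev QLSchedule := List QLAction

/-- Apply a QL schedule to a tree, operation by operation. -/
noncomputable def applyQL : QLSchedule → Tree3 → Option Tree3
  | [], T => some T
  | a :: rest, T => (applyOp a.1 T).bind (applyQL rest)

/-- `S[T]` is defined (and `T` is a document tree). -/
def DefinedOn (S : QLSchedule) (T : Tree3) : Prop := IsDT T ∧ (applyQL S T).isSome

/-- A QL schedule is consistent iff it is defined on at least one document tree. -/
def ConsistentQL (S : QLSchedule) : Prop := ∃ T, DefinedOn S T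

def Op.src : Op → Node
  | Op.add m _ _ => m
  | Op.del m _ _ => m

def Op.tgt : Op → Node
  | Op.add _ _ n => n
  | Op.del _ _ n => n

def Op.edge : Op → Edge
  | Op.add m l n => (m, l, n)
  | Op.del m l n => (m, l, n)

/-- The list of operations of a QL schedule. -/
def ops (S : QLSchedule) : List Op := S.map Prod.fst

/-- The operation containing the first occurrence of the node `x` in `S`, if any. -/
def firstNodeOp (S : QLSchedule) (x : Node) : Option Op :=
  (ops S).find? (fun o => (o.src == x) || (o.tgt == x))

/-- The operation containing the last occurrence of the node `x` in `S`, if any. -/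
def lastNodeOp (S : QLSchedule) (x : Node) : Option Op :=
  (ops S).reverse.find? (fun o => (o.src == x) || (o.tgt == x))

/-- The operation containing the first occurrence of the edge `e` in `S`, if any. -/
def firstEdgeOp (S : QLSchedule) (e : Edge) : Option Op :=
  (ops S).find? (fun o => o.edge == e)

/-- The operation containing the last occurrence of the edge `e` in `S`, if any. -/
def lastEdgeOp (S : QLSchedule) (e : Edge) : Option Op :=
  (ops S).reverse.find? (fun o => o.edge == e)

/-- Some edge with target `x` occurs in `S`. -/
def occursTgt (S : QLSchedule) (x : Node) : Prop := ∃ o ∈ ops S, o.tgt = x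

/-- `N^min_I(S)`. -/
def NminI (S : QLSchedule) : Set Node :=
  {x | ∃ l n, firstNodeOp S x = some (Op.add x l n)} ∪
  {x | ∃ l n, firstNodeOp S x = some (Op.del x l n)} ∪
  {x | ∃ m l, firstNodeOp S x = some (Op.del m l x)}

/-- `N^max_I(S)`. -/
def NmaxI (S : QLSchedule) : Set Node :=
  {x | ¬ ∃ m l, firstNodeOp S x = some (Op.add m l x)}

/-- `E^min_I(S)`. -/
def EminI (S : QLSchedule) : Set Edge :=
  {e | firstEdgeOp S e = some (Op.del e.1 e.2.1 e.2.2)}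

/-- `E^max_I(S)`. -/
def EmaxI (S : QLSchedule) : Set Edge :=
  EminI S ∪ {e | ¬ occursTgt S e.1 ∧ ¬ occursTgt S e.2.2}

/-- `N^min_O(S)`. -/
def NminO (S : QLSchedule) : Set Node :=
  {x | ∃ l n, lastNodeOp S x = some (Op.del x l n)} ∪
  {x | ∃ l n, lastNodeOp S x = some (Op.add x l n)} ∪
  {x | ∃ m l, lastNodeOp S x = some (Op.add m l x)}

/-- `N^max_O(S)`. -/
def NmaxO (S : QLSchedule) : Set Node :=
  {x | ¬ ∃ m l, lastNodeOp S x = some (Op.del m l x)}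

/-- `E^min_O(S)`. -/
def EminO (S : QLSchedule) : Set Edge :=
  {e | lastEdgeOp S e = some (Op.add e.1 e.2.1 e.2.2)}

/-- `E^max_O(S)`. -/
def EmaxO (S : QLSchedule) : Set Edge :=
  EminO S ∪ {e | ¬ occursTgt S e.1 ∧ ¬ occursTgt S e.2.2}

/-- `ADD(S)`: edges whose last occurrence in `S` is an addition. -/
def ADDs (S : QLSchedule) : Set Edge :=
  {e | lastEdgeOp S e = some (Op.add e.1 e.2.1 e.2.2)}

/-- `DEL(S)`: edges whose last occurrence in `S` is a deletion. -/
def DELs (S : QLSchedule) : Set Edge :=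
  {e | lastEdgeOp S e = some (Op.del e.1 e.2.1 e.2.2)}

/-- `T` is a basic input tree of `S`. -/
def BasicInput (S : QLSchedule) (T : Tree3) : Prop :=
  IsDT T ∧ NminI S ⊆ ↑T.N ∧ ↑T.N ⊆ NmaxI S ∧ EminI S ⊆ ↑T.E ∧ ↑T.E ⊆ EmaxI S

/-- `T` is a basic output tree of `S`. -/
def BasicOutput (S : QLSchedule) (T : Tree3) : Prop :=
  IsDT T ∧ NminO S ⊆ ↑T.N ∧ ↑T.N ⊆ NmaxO S ∧ EminO S ⊆ ↑T.E ∧ ↑T.E ⊆ EmaxO S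

/-- The C-condition (nine clauses). -/
def CCond (S : QLSchedule) : Prop :=
  (∀ i j (n l₁ n₁ n₂ l₂ : ℕ), i < j →
      (ops S)[i]? = some (Op.add n l₁ n₁) → (ops S)[j]? = some (Op.add n₂ l₂ n) →
      ∃ k : ℕ, i < k ∧ k < j ∧ (ops S)[k]? = some (Op.del n l₁ n₁)) ∧
  (∀ i j (n₁ l₁ n n₂ l₂ : ℕ), i < j →
      (ops S)[i]? = some (Op.add n₁ l₁ n) → (ops S)[j]? = some (Op.add n₂ l₂ n) →
      ∃ k : ℕ, i < k ∧ k < j ∧ (ops S)[k]? = some (Op.del n₁ l₁ n)) ∧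
  (∀ i j (n l₁ n₁ n₂ l₂ : ℕ), i < j →
      (ops S)[i]? = some (Op.add n l₁ n₁) → (ops S)[j]? = some (Op.del n₂ l₂ n) →
      ∃ k : ℕ, i < k ∧ k < j ∧ (ops S)[k]? = some (Op.del n l₁ n₁)) ∧
  (∀ i j (n₁ l₁ n l₂ n₂ : ℕ), i < j →
      (ops S)[i]? = some (Op.add n₁ l₁ n) → (ops S)[j]? = some (Op.del n l₂ n₂) →
      ∃ k : ℕ, i < k ∧ k < j ∧ (ops S)[k]? = some (Op.add n l₂ n₂)) ∧
  (∀ i j (n₁ l₁ n n₂ l₂ : ℕ), i < j → (n₁, l₁) ≠ (n₂, l₂) →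
      (ops S)[i]? = some (Op.add n₁ l₁ n) → (ops S)[j]? = some (Op.del n₂ l₂ n) →
      ∃ k : ℕ, i < k ∧ k < j ∧ (ops S)[k]? = some (Op.del n₁ l₁ n)) ∧
  (∀ i j (n l₁ n₁ n₂ l₂ : ℕ), i < j →
      (ops S)[i]? = some (Op.del n l₁ n₁) → (ops S)[j]? = some (Op.add n₂ l₂ n) →
      ∃ k : ℕ, ∃ n₃ l₃ : ℕ, i < k ∧ k < j ∧ (ops S)[k]? = some (Op.del n₃ l₃ n)) ∧
  (∀ i j (n₁ l₁ n l₂ n₂ : ℕ), i < j →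
      (ops S)[i]? = some (Op.del n₁ l₁ n) → (ops S)[j]? = some (Op.add n l₂ n₂) →
      ∃ k : ℕ, ∃ n₃ l₃ : ℕ, i < k ∧ k < j ∧ (ops S)[k]? = some (Op.add n₃ l₃ n)) ∧
  (∀ i j (n₁ l₁ n l₂ n₂ : ℕ), i < j →
      (ops S)[i]? = some (Op.del n₁ l₁ n) → (ops S)[j]? = some (Op.del n l₂ n₂) →
      ∃ k : ℕ, ∃ n₃ l₃ : ℕ, i < k ∧ k < j ∧ (ops S)[k]? = some (Op.add n₃ l₃ n)) ∧
  (∀ i j (n₁ l₁ n n₂ l₂ : ℕ), i < j →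
      (ops S)[i]? = some (Op.del n₁ l₁ n) → (ops S)[j]? = some (Op.del n₂ l₂ n) →
      ∃ k : ℕ, i < k ∧ k < j ∧ (ops S)[k]? = some (Op.add n₂ l₂ n))

/-! ## Transactions, equivalence and serializability of QL schedules -/

/-- Two QL schedules are interleavings of the same set of transactions: for every
transaction identifier, the subsequences of actions with that identifier coincide. -/
def SameTrans (S S' : QLSchedule) : Prop :=
  ∀ t : ℕ, S.filter (fun a => a.2 == t) = S'.filter (fun a => a.2 == t)

/-- A schedule is serial iff the actions of each transaction occur consecutively. -/
def Serial (S : QLSchedule) : Prop :=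
  ∀ i j k : ℕ, i ≤ j → j ≤ k →
    ∀ a b c : QLAction, S[i]? = some a → S[j]? = some b → S[k]? = some c →
      a.2 = c.2 → b.2 = a.2

/-- Two QL schedules are equivalent: they are defined on the same non-empty set of
document trees and produce the same output tree on each of them. -/
def EquivQL (S S' : QLSchedule) : Prop :=
  (∃ T, DefinedOn S T) ∧ ∀ T, IsDT T → applyQL S T = applyQL S' T

/-- A QL schedule is serializable iff it is equivalent to a serial schedule over the
same set of transactions. -/
def SerializableQL (S : QLSchedule) : Prop :=
  ∃ S', Serial S' ∧ SameTrans S S' ∧ EquivQL S S'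

/-! ## Paths and forests -/

/-- `SPath G m lp n`: there is a directed path from `m` to `n` in the edge set `G`
whose label path is `lp`. -/
inductive SPath (G : Set Edge) : Node → List Label → Node → Prop where
  | nil (n : Node) : SPath G n [] n
  | cons {m n n' : Node} {l : Label} {lp : List Label} :
      (m, l, n) ∈ G → SPath G n lp n' → SPath G m (l :: lp) n'

/-- A set of edges is a forest: no two distinct edges share a target, and
there is no (non-trivial) directed cycle. -/
def IsForest (G : Set Edge) : Prop :=
  (∀ e ∈ G, ∀ e' ∈ G, e.2.2 = e'.2.2 → e = e') ∧
  ¬ ∃ (n : Node) (lp : List Label), lp ≠ [] ∧ SPath G n lp n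

/-! ## Path expressions -/

inductive Step where
  | star : Step
  | lab : Label → Step
deriving DecidableEq

/-- Path expressions: `ε`, `pe/f` and `pe//f` (a single step `f` is `ε/f`). -/
inductive PathExpr where
  | eps : PathExpr
  | child : PathExpr → Step → PathExpr
  | desc : PathExpr → Step → PathExpr
deriving DecidableEq

def Step.mtch : Step → Label → Prop
  | Step.star, _ => True
  | Step.lab l, l' => l = l'

def Step.mtchB : Step → Label → Bool
  | Step.star, _ => true
  | Step.lab l, l' => l == l'

/-- The set `L(pe)` of label paths represented by a path expression
(a label path is a list of labels). -/
def PathExpr.lang : PathExpr → Set (List Label)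
  | PathExpr.eps => {[]}
  | PathExpr.child pe f => {w | ∃ u l, u ∈ pe.lang ∧ f.mtch l ∧ w = u ++ [l]}
  | PathExpr.desc pe f => {w | ∃ u v l, u ∈ pe.lang ∧ f.mtch l ∧ w = u ++ v ++ [l]}

/-- `SOP` on a *reversed* label path. -/
def SOPr : PathExpr → List Label → Set PathExpr
  | pe, [] => {pe}
  | PathExpr.eps, _ :: _ => ∅
  | PathExpr.child pe f, l :: lp => if f.mtchB l then SOPr pe lp else ∅
  | PathExpr.desc pe f, l :: lp =>
      if f.mtchB l then SOPr pe lp ∪ SOPr (PathExpr.desc pe Step.star) lp else ∅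
termination_by pe lp => lp.length

/-- `SOP(pe)_lp`: the set of non-empty `lp`-prefixes of `pe`. -/
def SOP (pe : PathExpr) (lp : List Label) : Set PathExpr := SOPr pe lp.reverse

/-- `L(SOP(pe)_lp)`. -/
def LSOP (pe : PathExpr) (lp : List Label) : Set (List Label) :=
  ⋃ pe' ∈ SOP pe lp, pe'.lang

/-- `pe/lp`: append a label path to a path expression with `/` separators. -/
def PathExpr.appendLP : PathExpr → List Label → PathExpr
  | pe, [] => pe
  | pe, l :: lp => PathExpr.appendLP (PathExpr.child pe (Step.lab l)) lp

/-- The prefixes of a path expression (including `ε`). -/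
def PathExpr.prefixes : PathExpr → Set PathExpr
  | PathExpr.eps => {PathExpr.eps}
  | PathExpr.child pe f => insert (PathExpr.child pe f) pe.prefixes
  | PathExpr.desc pe f => insert (PathExpr.desc pe f) pe.prefixes

/-! ## Schedules with queries -/

inductive GOp where
  | query : Node → PathExpr → GOp
  | add : Node → Label → Node → GOp
  | del : Node → Label → Node → GOp

abbrev GAction := GOp × ℕ

/-- A (general) schedule is a finite sequence of query/add/del actions. -/
abbrev Schedule := List GAction

def GOp.toOp? : GOp → Option Op
  | GOp.query _ _ => none
  | GOp.add m l n => some (Op.add m l n)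
  | GOp.del m l n => some (Op.del m l n)

/-- The QL schedule of a schedule: remove all query actions. -/
def qlOf (S : Schedule) : QLSchedule :=
  S.filterMap (fun a => (a.1.toOp?).map (fun o => (o, a.2)))

/-- The answer of `query(n,pe)` on a tree `T`. -/
def queryAnswer (n : Node) (pe : PathExpr) (T : Tree3) : Set Node :=
  {n' | n' ∈ T.N ∧ ∃ lp, SPath (↑T.E) n lp n' ∧ lp ∈ pe.lang}

/-- A schedule is consistent iff its QL schedule is. -/
def ConsistentSched (S : Schedule) : Prop := ConsistentQL (qlOf S)

/-- Run a schedule on a tree: the final tree together with, for each query (in order),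
its transaction identifier and its answer; `none` if some update is undefined. -/
noncomputable def runQ : Schedule → Tree3 → Option (Tree3 × List (ℕ × Set Node))
  | [], T => some (T, [])
  | (GOp.query n pe, t) :: rest, T =>
      (runQ rest T).map (fun p => (p.1, (t, queryAnswer n pe T) :: p.2))
  | (GOp.add m l n, _) :: rest, T =>
      (applyOp (Op.add m l n) T).bind (runQ rest)
  | (GOp.del m l n, _) :: rest, T =>
      (applyOp (Op.del m l n) T).bind (runQ rest)

/-- Two schedules are equivalent: defined on the same non-empty set of document trees,
and on each such tree they produce the same output tree and, per transaction, the same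
sequence of query answers. -/
def EquivSched (S₁ S₂ : Schedule) : Prop :=
  (∃ T, IsDT T ∧ (runQ S₁ T).isSome) ∧
  ∀ T, IsDT T →
    ((runQ S₁ T).isSome ↔ (runQ S₂ T).isSome) ∧
    ∀ p₁ p₂, runQ S₁ T = some p₁ → runQ S₂ T = some p₂ →
      p₁.1 = p₂.1 ∧
      ∀ t : ℕ, (p₁.2.filter (fun x => x.1 == t)).map Prod.snd
             = (p₂.2.filter (fun x => x.1 == t)).map Prod.snd

/-- Two schedules are interleavings of the same set of transactions. -/
def SameTransG (S S' : Schedule) : Prop :=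
  ∀ t : ℕ, S.filter (fun a => a.2 == t) = S'.filter (fun a => a.2 == t)

/-- A schedule is serial iff the actions of each transaction occur consecutively. -/
def SerialG (S : Schedule) : Prop :=
  ∀ i j k : ℕ, i ≤ j → j ≤ k →
    ∀ a b c : GAction, S[i]? = some a → S[j]? = some b → S[k]? = some c →
      a.2 = c.2 → b.2 = a.2

/-- A schedule is serializable iff it is equivalent to a serial schedule over the same
set of transactions. -/
def SerializableSched (S : Schedule) : Prop :=
  ∃ S', SerialG S' ∧ SameTransG S S' ∧ EquivSched S S'

/-- `E^min(S^Q)` where `Q` is the action at position `i` of `S`. -/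
def EminSQ (S : Schedule) (i : ℕ) : Set Edge :=
  (EminI (qlOf S) \ DELs (qlOf (S.take i))) ∪ ADDs (qlOf (S.take i))

/-- `E^max(S^Q)` where `Q` is the action at position `i` of `S`. -/
def EmaxSQ (S : Schedule) (i : ℕ) : Set Edge :=
  (EmaxI (qlOf S) \ DELs (qlOf (S.take i))) ∪ ADDs (qlOf (S.take i))

/-- `x` is a non-building-node of `S`: some `add(m,l,x)` or `del(m,l,x)` occurs in `S`. -/
def NonBuilding (S : Schedule) (x : Node) : Prop :=
  ∃ a ∈ S, ∃ m l, a.1 = GOp.add m l x ∨ a.1 = GOp.del m l x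

/-- `x` is a node of the graph (edge set) `G`. -/
def NodeOfGraph (G : Set Edge) (x : Node) : Prop := ∃ e ∈ G, e.1 = x ∨ e.2.2 = x

/-- `x` has a parent in the edge set `G`. -/
def HasParent (G : Set Edge) (x : Node) : Prop := ∃ e ∈ G, e.2.2 = x

/-- `PQRN(S,Q)` for the query `Q = query(n,pe)` at position `i` of `S`:
the nodes `m` of the graph `E^min(S^Q)` that are non-building-nodes, whose root
ancestor `r` in the forest `E^min(S^Q)` (the node with no parent from which `m` is
reachable, via the label path `ALabel(S^Q,m)`) is a building-node different from `n`,
and such that `L(SOP(pe)_{ALabel(S^Q,m)}) ≠ ∅`. -/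
def PQRN (S : Schedule) (i : ℕ) (n : Node) (pe : PathExpr) : Set Node :=
  {m | NodeOfGraph (EminSQ S i) m ∧ NonBuilding S m ∧
       ∃ r lp, SPath (EminSQ S i) r lp m ∧ ¬ HasParent (EminSQ S i) r ∧
         ¬ NonBuilding S r ∧ r ≠ n ∧ LSOP pe lp ≠ ∅}

/-- The answer of the query at position `i` of `S` when `S` is applied to `T`
(the query is evaluated on the tree obtained by applying the actions before it). -/
noncomputable def answerAt (S : Schedule) (i : ℕ) (T : Tree3) : Option (Set Node) :=
  match S[i]? with
  | some (GOp.query n pe, _) => (applyQL (qlOf (S.take i)) T).map (queryAnswer n pe)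
  | _ => none

/-! ## Auxiliary lemmas for Statement 3 -/

section Statement3Aux

lemma ops_cons (a : QLAction) (S : QLSchedule) : ops (a :: S) = a.1 :: ops S := rfl

lemma ops_nil : ops ([] : QLSchedule) = [] := rfl

/-- The node predicate used in `firstNodeOp`/`lastNodeOp`. -/
lemma nodePred_iff (o : Op) (x : Node) :
    ((o.src == x) || (o.tgt == x)) = true ↔ (o.src = x ∨ o.tgt = x) := by
  simp

lemma edgePred_iff (o : Op) (e : Edge) : (o.edge == e) = true ↔ o.edge = e := by simp

lemma firstNodeOp_cons_pos {a : QLAction} {S : QLSchedule} {x : Node}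
    (h : a.1.src = x ∨ a.1.tgt = x) : firstNodeOp (a :: S) x = some a.1 := by
  unfold firstNodeOp
  rw [ops_cons]
  exact List.find?_cons_of_pos ((nodePred_iff a.1 x).2 h)

lemma firstNodeOp_cons_neg {a : QLAction} {S : QLSchedule} {x : Node}
    (h : ¬(a.1.src = x ∨ a.1.tgt = x)) : firstNodeOp (a :: S) x = firstNodeOp S x := by
  unfold firstNodeOp
  rw [ops_cons]
  exact List.find?_cons_of_neg (by simpa [nodePred_iff] using h)

lemma firstEdgeOp_cons_pos {a : QLAction} {S : QLSchedule} {e : Edge}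
    (h : a.1.edge = e) : firstEdgeOp (a :: S) e = some a.1 := by
  unfold firstEdgeOp
  rw [ops_cons]
  exact List.find?_cons_of_pos ((edgePred_iff a.1 e).2 h)

lemma firstEdgeOp_cons_neg {a : QLAction} {S : QLSchedule} {e : Edge}
    (h : a.1.edge ≠ e) : firstEdgeOp (a :: S) e = firstEdgeOp S e := by
  unfold firstEdgeOp
  rw [ops_cons]
  exact List.find?_cons_of_neg (by simpa [edgePred_iff] using h)

lemma lastNodeOp_cons_some {a : QLAction} {S : QLSchedule} {x : Node} {o : Op}
    (h : lastNodeOp S x = some o) : lastNodeOp (a :: S) x = some o := by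
  unfold lastNodeOp at h ⊢
  rw [ops_cons, List.reverse_cons, List.find?_append, h]
  rfl

lemma lastNodeOp_cons_none {a : QLAction} {S : QLSchedule} {x : Node}
    (h : lastNodeOp S x = none) : lastNodeOp (a :: S) x = firstNodeOp [a] x := by
  unfold lastNodeOp at h ⊢
  unfold firstNodeOp
  rw [ops_cons, List.reverse_cons, List.find?_append, h]
  rfl

lemma lastEdgeOp_cons_some {a : QLAction} {S : QLSchedule} {e : Edge} {o : Op}
    (h : lastEdgeOp S e = some o) : lastEdgeOp (a :: S) e = some o := by
  unfold lastEdgeOp at h ⊢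
  rw [ops_cons, List.reverse_cons, List.find?_append, h]
  rfl

lemma lastEdgeOp_cons_none {a : QLAction} {S : QLSchedule} {e : Edge}
    (h : lastEdgeOp S e = none) : lastEdgeOp (a :: S) e = firstEdgeOp [a] e := by
  unfold lastEdgeOp at h ⊢
  unfold firstEdgeOp
  rw [ops_cons, List.reverse_cons, List.find?_append, h]
  rfl

lemma firstNodeOp_single_pos {a : QLAction} {x : Node}
    (h : a.1.src = x ∨ a.1.tgt = x) : firstNodeOp [a] x = some a.1 :=
  firstNodeOp_cons_pos h

lemma firstNodeOp_single_neg {a : QLAction} {x : Node}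
    (h : ¬(a.1.src = x ∨ a.1.tgt = x)) : firstNodeOp [a] x = none :=
  firstNodeOp_cons_neg h

lemma firstEdgeOp_single_pos {a : QLAction} {e : Edge}
    (h : a.1.edge = e) : firstEdgeOp [a] e = some a.1 :=
  firstEdgeOp_cons_pos h

lemma firstEdgeOp_single_neg {a : QLAction} {e : Edge}
    (h : a.1.edge ≠ e) : firstEdgeOp [a] e = none :=
  firstEdgeOp_cons_neg h

lemma lastNodeOp_none_iff {S : QLSchedule} {x : Node} :
    lastNodeOp S x = none ↔ ∀ o ∈ ops S, ¬(o.src = x ∨ o.tgt = x) := by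
  unfold lastNodeOp
  rw [List.find?_eq_none]
  constructor
  · intro h o ho
    simpa [nodePred_iff] using h o (List.mem_reverse.2 ho)
  · intro h o ho
    simpa [nodePred_iff] using h o (List.mem_reverse.1 ho)

lemma lastEdgeOp_none_iff {S : QLSchedule} {e : Edge} :
    lastEdgeOp S e = none ↔ ∀ o ∈ ops S, o.edge ≠ e := by
  unfold lastEdgeOp
  rw [List.find?_eq_none]
  constructor
  · intro h o ho
    simpa [edgePred_iff] using h o (List.mem_reverse.2 ho)
  · intro h o ho
    simpa [edgePred_iff] using h o (List.mem_reverse.1 ho)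

lemma lastEdgeOp_some_shape {S : QLSchedule} {e : Edge} {o : Op}
    (h : lastEdgeOp S e = some o) :
    o = Op.add e.1 e.2.1 e.2.2 ∨ o = Op.del e.1 e.2.1 e.2.2 := by
  have := List.find?_some h
  rw [edgePred_iff] at this
  cases o with
  | add m l n =>
      left
      obtain ⟨m, l, n⟩ := e
      simp only [Op.edge] at this
      simp [Prod.ext_iff] at this
      simp [this]
  | del m l n =>
      right
      obtain ⟨m, l, n⟩ := e
      simp only [Op.edge] at this
      simp [Prod.ext_iff] at this
      simp [this]

lemma lastEdgeOp_some_mem {S : QLSchedule} {e : Edge} {o : Op}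
    (h : lastEdgeOp S e = some o) : o ∈ ops S := by
  have := List.mem_of_find?_eq_some h
  exact List.mem_reverse.1 this

lemma lastNodeOp_some_pred {S : QLSchedule} {x : Node} {o : Op}
    (h : lastNodeOp S x = some o) : o.src = x ∨ o.tgt = x := by
  have := List.find?_some h
  rwa [nodePred_iff] at this

end Statement3Aux
section Statement3Tree

lemma applyOp_add_def (m l n : ℕ) (T : Tree3) : applyOp (Op.add m l n) T =
    if (m,l,n) ∈ T.E ∨ ¬ IsDT ⟨insert n T.N, insert (m,l,n) T.E, T.root⟩ then none
    else some ⟨insert n T.N, insert (m,l,n) T.E, T.root⟩ := rfl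

lemma applyOp_del_def (m l n : ℕ) (T : Tree3) : applyOp (Op.del m l n) T =
    if (m,l,n) ∉ T.E ∨ ¬ IsDT ⟨T.N.erase n, T.E.erase (m,l,n), T.root⟩ then none
    else some ⟨T.N.erase n, T.E.erase (m,l,n), T.root⟩ := rfl

lemma applyOp_add_eq_some {m l n : ℕ} {T U : Tree3}
    (h : applyOp (Op.add m l n) T = some U) :
    U = ⟨insert n T.N, insert (m,l,n) T.E, T.root⟩ ∧ (m,l,n) ∉ T.E ∧ IsDT U := by
  rw [applyOp_add_def] at h
  by_cases hc : (m,l,n) ∈ T.E ∨ ¬ IsDT (⟨insert n T.N, insert (m,l,n) T.E, T.root⟩ : Tree3)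
  · rw [if_pos hc] at h; exact absurd h (by simp)
  · rw [if_neg hc] at h
    push_neg at hc
    obtain ⟨h1, h2⟩ := hc
    cases h
    exact ⟨rfl, h1, h2⟩

lemma applyOp_del_eq_some {m l n : ℕ} {T U : Tree3}
    (h : applyOp (Op.del m l n) T = some U) :
    U = ⟨T.N.erase n, T.E.erase (m,l,n), T.root⟩ ∧ (m,l,n) ∈ T.E ∧ IsDT U := by
  rw [applyOp_del_def] at h
  by_cases hc : (m,l,n) ∉ T.E ∨ ¬ IsDT (⟨T.N.erase n, T.E.erase (m,l,n), T.root⟩ : Tree3)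
  · rw [if_pos hc] at h; exact absurd h (by simp)
  · rw [if_neg hc] at h
    push_neg at hc
    obtain ⟨h1, h2⟩ := hc
    cases h
    exact ⟨rfl, h1, h2⟩

lemma no_self_loop' {T : Tree3} (hT : IsDT T) {l n : ℕ} : (n,l,n) ∉ T.E := by
  intro h
  obtain ⟨hroot, hends, huniq, hnr, hreach⟩ := hT
  have hn : n ∈ T.N := (hends _ h).2
  have key : ∀ x, Relation.ReflTransGen (estep (↑T.E)) T.root x → x ≠ n := by
    intro x hx
    induction hx with
    | refl =>
        intro hh
        exact hnr _ h hh.symm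
    | @tail b c hb hstep ih =>
        intro hh
        obtain ⟨l', hl'⟩ := hstep
        rw [Finset.mem_coe] at hl'
        have heq := huniq _ hl' _ h (by rw [hh])
        have hb' : b = n := by simpa using congrArg Prod.fst heq
        exact ih hb'
  exact key n (hreach n hn) rfl

lemma no_self_loop {T : Tree3} (hT : IsDT T) {m l n : ℕ} (h : (m,l,n) ∈ T.E) : m ≠ n :=
  fun hmn => no_self_loop' hT (hmn ▸ h)

lemma uniq_incoming {T : Tree3} (hT : IsDT T) {m l m' l' n : ℕ}
    (h : (m,l,n) ∈ T.E) (h' : (m',l',n) ∈ T.E) : m = m' ∧ l = l' := by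
  have := hT.2.2.1 _ h _ h' rfl
  simp [Prod.ext_iff] at this
  exact ⟨this.1, this.2⟩

lemma isDT_insert {T : Tree3} (hT : IsDT T) {m l n : ℕ} (hm : m ∈ T.N) (hn : n ∉ T.N) :
    IsDT ⟨insert n T.N, insert (m,l,n) T.E, T.root⟩ := by
  obtain ⟨hroot, hends, huniq, hnr, hreach⟩ := hT
  have hedge_tgt : ∀ e ∈ T.E, e.2.2 ≠ n := fun e he h => hn (h ▸ (hends e he).2)
  refine ⟨Finset.mem_insert_of_mem hroot, ?_, ?_, ?_, ?_⟩
  · intro e he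
    rcases Finset.mem_insert.mp he with rfl | he
    · exact ⟨Finset.mem_insert_of_mem hm, Finset.mem_insert_self _ _⟩
    · exact ⟨Finset.mem_insert_of_mem (hends e he).1, Finset.mem_insert_of_mem (hends e he).2⟩
  · intro e he e' he' htgt
    rcases Finset.mem_insert.mp he with rfl | he <;> rcases Finset.mem_insert.mp he' with rfl | he'
    · rfl
    · exact absurd htgt (Ne.symm (hedge_tgt e' he'))
    · exact absurd htgt (hedge_tgt e he)
    · exact huniq e he e' he' htgt
  · intro e he
    rcases Finset.mem_insert.mp he with rfl | he
    · intro h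
      apply hn
      have hh : n = T.root := h
      rw [hh]
      exact hroot
    · exact hnr e he
  · have mono : ∀ a b : Node, Relation.ReflTransGen (estep ↑T.E) a b →
        Relation.ReflTransGen (estep ↑(insert (m,l,n) T.E)) a b := by
      intro a b h
      refine Relation.ReflTransGen.mono ?_ _ _ h
      rintro p q ⟨l', hl⟩
      exact ⟨l', by simp only [Finset.coe_insert, Set.mem_insert_iff]; right; exact hl⟩
    intro x hx
    rcases Finset.mem_insert.mp hx with rfl | hx
    · exact (mono _ _ (hreach m hm)).tail ⟨l, by simp⟩
    · exact mono _ _ (hreach x hx)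

lemma isDT_erase {T : Tree3} (hT : IsDT T) {m l n : ℕ} (he₀ : (m,l,n) ∈ T.E)
    (hnochild : ∀ l' p, (n,l',p) ∉ T.E) :
    IsDT ⟨T.N.erase n, T.E.erase (m,l,n), T.root⟩ := by
  obtain ⟨hroot, hends, huniq, hnr, hreach⟩ := hT
  have hnroot : n ≠ T.root := hnr _ he₀
  refine ⟨Finset.mem_erase.2 ⟨Ne.symm hnroot, hroot⟩, ?_, ?_, ?_, ?_⟩
  · intro e he
    obtain ⟨hne, he⟩ := Finset.mem_erase.mp he
    have h1 : e.1 ≠ n := by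
      intro h
      exact hnochild e.2.1 e.2.2 (by rw [← h]; exact he)
    have h2 : e.2.2 ≠ n := by
      intro h
      exact hne (huniq e he (m,l,n) he₀ (by rw [h]))
    exact ⟨Finset.mem_erase.2 ⟨h1, (hends e he).1⟩, Finset.mem_erase.2 ⟨h2, (hends e he).2⟩⟩
  · intro e he e' he' htgt
    exact huniq e (Finset.mem_erase.mp he).2 e' (Finset.mem_erase.mp he').2 htgt
  · intro e he
    exact hnr e (Finset.mem_erase.mp he).2
  · intro x hx
    obtain ⟨hxn, hx⟩ := Finset.mem_erase.mp hx
    have key : ∀ y, Relation.ReflTransGen (estep ↑T.E) T.root y → y ≠ n →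
        Relation.ReflTransGen (estep ↑(T.E.erase (m,l,n))) T.root y := by
      intro y hy
      induction hy with
      | refl => intro _; exact Relation.ReflTransGen.refl
      | @tail b c hb hstep ih =>
          intro hcn
          obtain ⟨l', hl'⟩ := hstep
          rw [Finset.mem_coe] at hl'
          have hbn : b ≠ n := by
            intro h
            exact hnochild l' c (h ▸ hl')
          refine (ih hbn).tail ⟨l', ?_⟩
          rw [Finset.mem_coe, Finset.mem_erase]
          refine ⟨?_, hl'⟩
          intro h
          exact hcn (by simpa using congrArg (fun e => e.2.2) h)
    exact key x (hreach x hx) hxn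

lemma applyQL_nil (T : Tree3) : applyQL [] T = some T := rfl

lemma applyQL_cons (a : QLAction) (S : QLSchedule) (T : Tree3) :
    applyQL (a :: S) T = (applyOp a.1 T).bind (applyQL S) := rfl

/-- Node preservation: if no operation of `R` has target `x`, membership of `x`
in the node set is preserved by running `R`. -/
lemma applyQL_node_pres {R : QLSchedule} {T U : Tree3} (h : applyQL R T = some U)
    {x : Node} (hx : ∀ o ∈ ops R, o.tgt ≠ x) : (x ∈ U.N ↔ x ∈ T.N) := by
  induction R generalizing T with
  | nil => rw [applyQL_nil] at h; cases h; rfl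
  | cons a rest ih =>
      rw [applyQL_cons, Option.bind_eq_some_iff] at h
      obtain ⟨T₁, h1, h2⟩ := h
      have hxr : ∀ o ∈ ops rest, o.tgt ≠ x := fun o ho => hx o (by rw [ops_cons]; right; exact ho)
      have hxa : a.1.tgt ≠ x := hx a.1 (by rw [ops_cons]; left)
      rw [ih h2 hxr]
      cases ha : a.1 with
      | add m l n =>
          rw [ha] at h1 hxa
          obtain ⟨rfl, -, -⟩ := applyOp_add_eq_some h1
          simp only [Finset.mem_insert]
          have : n ≠ x := hxa
          constructor
          · rintro (rfl | h)
            · exact absurd rfl this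
            · exact h
          · exact Or.inr
      | del m l n =>
          rw [ha] at h1 hxa
          obtain ⟨rfl, -, -⟩ := applyOp_del_eq_some h1
          simp only [Finset.mem_erase]
          have : n ≠ x := hxa
          constructor
          · exact fun h => h.2
          · exact fun h => ⟨fun hh => this (hh ▸ rfl), h⟩

/-- Edge preservation: if no operation of `R` involves the edge `e`, membership of `e`
in the edge set is preserved by running `R`. -/
lemma applyQL_edge_pres {R : QLSchedule} {T U : Tree3} (h : applyQL R T = some U)
    {e : Edge} (he : ∀ o ∈ ops R, o.edge ≠ e) : (e ∈ U.E ↔ e ∈ T.E) := by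
  induction R generalizing T with
  | nil => rw [applyQL_nil] at h; cases h; rfl
  | cons a rest ih =>
      rw [applyQL_cons, Option.bind_eq_some_iff] at h
      obtain ⟨T₁, h1, h2⟩ := h
      have her : ∀ o ∈ ops rest, o.edge ≠ e := fun o ho => he o (by rw [ops_cons]; right; exact ho)
      have hea : a.1.edge ≠ e := he a.1 (by rw [ops_cons]; left)
      rw [ih h2 her]
      cases ha : a.1 with
      | add m l n =>
          rw [ha] at h1 hea
          obtain ⟨rfl, -, -⟩ := applyOp_add_eq_some h1
          simp only [Finset.mem_insert]
          have : (m,l,n) ≠ e := hea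
          constructor
          · rintro (rfl | h)
            · exact absurd rfl this
            · exact h
          · exact Or.inr
      | del m l n =>
          rw [ha] at h1 hea
          obtain ⟨rfl, -, -⟩ := applyOp_del_eq_some h1
          simp only [Finset.mem_erase]
          have : (m,l,n) ≠ e := hea
          constructor
          · exact fun h => h.2
          · exact fun h => ⟨fun hh => this (hh ▸ rfl), h⟩

end Statement3Tree
section Statement3BasicInput

lemma mem_NminI_iff {S : QLSchedule} {x : Node} : x ∈ NminI S ↔
    (∃ l n, firstNodeOp S x = some (Op.add x l n)) ∨
    (∃ l n, firstNodeOp S x = some (Op.del x l n)) ∨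
    (∃ m l, firstNodeOp S x = some (Op.del m l x)) := by
  simp [NminI, Set.mem_union, Set.mem_setOf_eq, or_assoc]

lemma mem_NmaxI_iff {S : QLSchedule} {x : Node} : x ∈ NmaxI S ↔
    ¬ ∃ m l, firstNodeOp S x = some (Op.add m l x) := Iff.rfl

lemma mem_EminI_iff {S : QLSchedule} {e : Edge} : e ∈ EminI S ↔
    firstEdgeOp S e = some (Op.del e.1 e.2.1 e.2.2) := Iff.rfl

lemma mem_EmaxI_iff {S : QLSchedule} {e : Edge} : e ∈ EmaxI S ↔
    e ∈ EminI S ∨ (¬ occursTgt S e.1 ∧ ¬ occursTgt S e.2.2) := Iff.rfl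

lemma mem_NminO_iff {S : QLSchedule} {x : Node} : x ∈ NminO S ↔
    (∃ l n, lastNodeOp S x = some (Op.del x l n)) ∨
    (∃ l n, lastNodeOp S x = some (Op.add x l n)) ∨
    (∃ m l, lastNodeOp S x = some (Op.add m l x)) := by
  simp [NminO, Set.mem_union, Set.mem_setOf_eq, or_assoc]

lemma mem_NmaxO_iff {S : QLSchedule} {x : Node} : x ∈ NmaxO S ↔
    ¬ ∃ m l, lastNodeOp S x = some (Op.del m l x) := Iff.rfl

lemma mem_EminO_iff {S : QLSchedule} {e : Edge} : e ∈ EminO S ↔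
    lastEdgeOp S e = some (Op.add e.1 e.2.1 e.2.2) := Iff.rfl

lemma mem_EmaxO_iff {S : QLSchedule} {e : Edge} : e ∈ EmaxO S ↔
    e ∈ EminO S ∨ (¬ occursTgt S e.1 ∧ ¬ occursTgt S e.2.2) := Iff.rfl

lemma mem_ADDs_iff {S : QLSchedule} {e : Edge} : e ∈ ADDs S ↔
    lastEdgeOp S e = some (Op.add e.1 e.2.1 e.2.2) := Iff.rfl

lemma mem_DELs_iff {S : QLSchedule} {e : Edge} : e ∈ DELs S ↔
    lastEdgeOp S e = some (Op.del e.1 e.2.1 e.2.2) := Iff.rfl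

lemma firstNodeOp_nil (x : Node) : firstNodeOp [] x = none := rfl
lemma firstEdgeOp_nil (e : Edge) : firstEdgeOp [] e = none := rfl
lemma lastNodeOp_nil (x : Node) : lastNodeOp [] x = none := rfl
lemma lastEdgeOp_nil (e : Edge) : lastEdgeOp [] e = none := rfl

lemma occursTgt_nil (x : Node) : ¬ occursTgt [] x := by
  rintro ⟨o, ho, -⟩
  simp [ops] at ho

lemma occursTgt_cons {a : QLAction} {S : QLSchedule} {x : Node} :
    occursTgt (a :: S) x ↔ a.1.tgt = x ∨ occursTgt S x := by
  constructor
  · rintro ⟨o, ho, htgt⟩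
    rw [ops_cons, List.mem_cons] at ho
    rcases ho with rfl | ho
    · exact Or.inl htgt
    · exact Or.inr ⟨o, ho, htgt⟩
  · rintro (h | ⟨o, ho, htgt⟩)
    · exact ⟨a.1, by rw [ops_cons]; exact List.mem_cons_self, h⟩
    · exact ⟨o, by rw [ops_cons]; exact List.mem_cons_of_mem _ ho, htgt⟩

lemma occursTgt_of_rest {a : QLAction} {S : QLSchedule} {x : Node}
    (h : occursTgt S x) : occursTgt (a :: S) x := occursTgt_cons.2 (Or.inr h)

lemma basicInput_nil (T : Tree3) (hT : IsDT T) : BasicInput [] T := by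
  refine ⟨hT, ?_, ?_, ?_, ?_⟩
  · intro x hx
    rw [mem_NminI_iff] at hx
    rcases hx with ⟨l, n, h⟩ | ⟨l, n, h⟩ | ⟨m, l, h⟩ <;> rw [firstNodeOp_nil] at h <;> cases h
  · intro x _
    rintro ⟨m, l, h⟩
    rw [firstNodeOp_nil] at h
    cases h
  · intro e he
    rw [mem_EminI_iff, firstEdgeOp_nil] at he
    cases he
  · intro e _
    exact Or.inr ⟨occursTgt_nil _, occursTgt_nil _⟩

lemma basicOutput_nil (T : Tree3) (hT : IsDT T) : BasicOutput [] T := by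
  refine ⟨hT, ?_, ?_, ?_, ?_⟩
  · intro x hx
    rw [mem_NminO_iff] at hx
    rcases hx with ⟨l, n, h⟩ | ⟨l, n, h⟩ | ⟨m, l, h⟩ <;> rw [lastNodeOp_nil] at h <;> cases h
  · intro x _
    rintro ⟨m, l, h⟩
    rw [lastNodeOp_nil] at h
    cases h
  · intro e he
    rw [mem_EminO_iff, lastEdgeOp_nil] at he
    cases he
  · intro e _
    exact Or.inr ⟨occursTgt_nil _, occursTgt_nil _⟩

/-- Every document tree on which `R` is defined is a basic input tree of `R`. -/
lemma definedOn_basicInput : ∀ (R : QLSchedule) (T : Tree3),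
    IsDT T → (applyQL R T).isSome → BasicInput R T := by
  intro R
  induction R with
  | nil => exact fun T hT _ => basicInput_nil T hT
  | cons a rest ih =>
    intro T hT hdef
    rw [applyQL_cons] at hdef
    obtain ⟨U, hU⟩ := Option.isSome_iff_exists.mp hdef
    rw [Option.bind_eq_some_iff] at hU
    obtain ⟨T₁, h1, h2⟩ := hU
    have hdef₁ : (applyQL rest T₁).isSome := by rw [h2]; rfl
    cases ha : a.1 with
    | add m l n =>
      rw [ha] at h1
      obtain ⟨hT₁eq, hnotE, hDT₁⟩ := applyOp_add_eq_some h1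
      subst hT₁eq
      have hBI₁ := ih _ hDT₁ hdef₁
      obtain ⟨-, hN1, hN2, hE1, hE2⟩ := hBI₁
      have hmemE₁ : (m,l,n) ∈ (⟨insert n T.N, insert (m,l,n) T.E, T.root⟩ : Tree3).E :=
        Finset.mem_insert_self _ _
      have hmn : m ≠ n := no_self_loop hDT₁ hmemE₁
      have hm0 : m ∈ T.N := by
        have := (hDT₁.2.1 _ hmemE₁).1
        simp only [Finset.mem_insert] at this
        rcases this with h | h
        · exact absurd h hmn
        · exact h
      have hnN : n ∉ T.N := by
        intro hn
        by_cases hnr : n = T.root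
        · exact hDT₁.2.2.2.1 _ hmemE₁ hnr
        · have hre := hT.2.2.2.2 n hn
          rcases hre.cases_tail with h | ⟨b, -, hstep⟩
          · exact hnr h
          · obtain ⟨l', hl'⟩ := hstep
            rw [Finset.mem_coe] at hl'
            have hl₁ : (b,l',n) ∈ (⟨insert n T.N, insert (m,l,n) T.E, T.root⟩ : Tree3).E :=
              Finset.mem_insert_of_mem hl'
            have heq := hDT₁.2.2.1 _ hl₁ _ hmemE₁ rfl
            rw [heq] at hl'
            exact hnotE hl'
      refine ⟨hT, ?_, ?_, ?_, ?_⟩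
      · -- NminI ⊆ T.N
        intro x hx
        rw [mem_NminI_iff] at hx
        by_cases hmem : a.1.src = x ∨ a.1.tgt = x
        · have hfx := firstNodeOp_cons_pos (S := rest) hmem
          rw [ha] at hfx
          rcases hx with ⟨l', n', h⟩ | ⟨l', n', h⟩ | ⟨m', l', h⟩
          · have := Option.some.inj (hfx.symm.trans h)
            injection this with e1 e2 e3
            rw [Finset.mem_coe, ← e1]
            exact hm0
          · exact Op.noConfusion (Option.some.inj (hfx.symm.trans h))
          · exact Op.noConfusion (Option.some.inj (hfx.symm.trans h))
        · have hfx := firstNodeOp_cons_neg (S := rest) hmem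
          have hxr : x ∈ NminI rest := by rw [mem_NminI_iff, ← hfx]; exact hx
          have hx₁ := hN1 hxr
          simp only [Finset.coe_insert, Set.mem_insert_iff, Finset.mem_coe] at hx₁
          rcases hx₁ with hxn | hx₁
          · exact absurd (Or.inr (by simp [ha, Op.tgt, hxn])) hmem
          · exact hx₁
      · -- T.N ⊆ NmaxI
        intro x hx
        rintro ⟨m', l', h⟩
        by_cases hmem : a.1.src = x ∨ a.1.tgt = x
        · have hfx := firstNodeOp_cons_pos (S := rest) hmem
          rw [ha] at hfx
          have := Option.some.inj (hfx.symm.trans h)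
          injection this with e1 e2 e3
          rw [← e3] at hx
          exact hnN hx
        · have hfx := firstNodeOp_cons_neg (S := rest) hmem
          rw [hfx] at h
          have hx₁ : x ∈ (↑(insert n T.N) : Set Node) := by
            simp only [Finset.coe_insert, Set.mem_insert_iff, Finset.mem_coe]
            exact Or.inr hx
          exact hN2 hx₁ ⟨m', l', h⟩
      · -- EminI ⊆ T.E
        intro e he
        rw [mem_EminI_iff] at he
        by_cases hee : a.1.edge = e
        · have hfx := firstEdgeOp_cons_pos (S := rest) hee
          rw [hfx, ha] at he
          exact Op.noConfusion (Option.some.inj he)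
        · have hfx := firstEdgeOp_cons_neg (S := rest) hee
          rw [hfx] at he
          have := hE1 he
          simp only [Finset.coe_insert, Set.mem_insert_iff, Finset.mem_coe] at this
          rcases this with rfl | h
          · exact absurd (by rw [ha]; rfl) hee
          · exact h
      · -- T.E ⊆ EmaxI
        intro e he
        rw [Finset.mem_coe] at he
        have hen1 : e.1 ≠ n := fun h => hnN (h ▸ (hT.2.1 e he).1)
        have hen2 : e.2.2 ≠ n := fun h => hnN (h ▸ (hT.2.1 e he).2)
        have he₁ : e ∈ (↑(insert (m,l,n) T.E) : Set Edge) := by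
          simp only [Finset.coe_insert, Set.mem_insert_iff, Finset.mem_coe]
          exact Or.inr he
        rcases hE2 he₁ with hmin | ⟨ht1, ht2⟩
        · left
          rw [mem_EminI_iff] at hmin ⊢
          have hee : a.1.edge ≠ e := by
            rw [ha]
            intro hh
            rw [← hh] at he
            exact hnotE he
          rw [firstEdgeOp_cons_neg hee]
          exact hmin
        · right
          constructor
          · intro hocc
            rcases occursTgt_cons.1 hocc with h | h
            · rw [ha] at h; exact hen1 h.symm
            · exact ht1 h
          · intro hocc
            rcases occursTgt_cons.1 hocc with h | h
            · rw [ha] at h; exact hen2 h.symm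
            · exact ht2 h
    | del m l n =>
      rw [ha] at h1
      obtain ⟨hT₁eq, heE, hDT₁⟩ := applyOp_del_eq_some h1
      subst hT₁eq
      have hBI₁ := ih _ hDT₁ hdef₁
      obtain ⟨-, hN1, hN2, hE1, hE2⟩ := hBI₁
      have hmn : m ≠ n := no_self_loop hT heE
      have hm0 : m ∈ T.N := (hT.2.1 _ heE).1
      have hn0 : n ∈ T.N := (hT.2.1 _ heE).2
      have hnochildT : ∀ l' p, (n,l',p) ∉ T.E := by
        intro l' p hp
        have hne : (n,l',p) ≠ (m,l,n) := by
          intro h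
          injection h with e1 e2
          exact hmn e1.symm
        have hp₁ : (n,l',p) ∈ (⟨T.N.erase n, T.E.erase (m,l,n), T.root⟩ : Tree3).E :=
          Finset.mem_erase.2 ⟨hne, hp⟩
        have := (hDT₁.2.1 _ hp₁).1
        exact absurd rfl (Finset.mem_erase.mp this).1
      refine ⟨hT, ?_, ?_, ?_, ?_⟩
      · -- NminI ⊆ T.N
        intro x hx
        rw [mem_NminI_iff] at hx
        by_cases hmem : a.1.src = x ∨ a.1.tgt = x
        · have hfx := firstNodeOp_cons_pos (S := rest) hmem
          rw [ha] at hfx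
          rcases hx with ⟨l', n', h⟩ | ⟨l', n', h⟩ | ⟨m', l', h⟩
          · exact Op.noConfusion (Option.some.inj (hfx.symm.trans h))
          · have := Option.some.inj (hfx.symm.trans h)
            injection this with e1 e2 e3
            rw [Finset.mem_coe, ← e1]
            exact hm0
          · have := Option.some.inj (hfx.symm.trans h)
            injection this with e1 e2 e3
            rw [Finset.mem_coe, ← e3]
            exact hn0
        · have hfx := firstNodeOp_cons_neg (S := rest) hmem
          have hxr : x ∈ NminI rest := by rw [mem_NminI_iff, ← hfx]; exact hx
          have hx₁ := hN1 hxr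
          simp only [Finset.coe_erase, Set.mem_diff, Finset.mem_coe] at hx₁
          exact hx₁.1
      · -- T.N ⊆ NmaxI
        intro x hx
        rintro ⟨m', l', h⟩
        by_cases hmem : a.1.src = x ∨ a.1.tgt = x
        · have hfx := firstNodeOp_cons_pos (S := rest) hmem
          rw [ha] at hfx
          exact Op.noConfusion (Option.some.inj (hfx.symm.trans h))
        · have hfx := firstNodeOp_cons_neg (S := rest) hmem
          rw [hfx] at h
          have hxn : x ≠ n := by
            intro hh
            exact hmem (Or.inr (by rw [ha, hh]; rfl))
          have hx₁ : x ∈ (↑(T.N.erase n) : Set Node) := by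
            simp only [Finset.coe_erase, Set.mem_diff, Finset.mem_coe]
            exact ⟨hx, by simpa using hxn⟩
          exact hN2 hx₁ ⟨m', l', h⟩
      · -- EminI ⊆ T.E
        intro e he
        rw [mem_EminI_iff] at he
        by_cases hee : a.1.edge = e
        · rw [ha] at hee
          rw [Finset.mem_coe, ← hee]
          exact heE
        · have hfx := firstEdgeOp_cons_neg (S := rest) hee
          rw [hfx] at he
          have := hE1 he
          simp only [Finset.coe_erase, Set.mem_diff, Finset.mem_coe] at this
          exact this.1
      · -- T.E ⊆ EmaxI
        intro e he
        rw [Finset.mem_coe] at he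
        by_cases hee : e = (m,l,n)
        · left
          rw [mem_EminI_iff]
          have hfx := firstEdgeOp_cons_pos (S := rest) (a := a) (e := e) (by rw [ha, hee]; rfl)
          rw [ha] at hfx
          rw [hfx, hee]
        · have he₁ : e ∈ (↑(T.E.erase (m,l,n)) : Set Edge) := by
            simp only [Finset.coe_erase, Set.mem_diff, Finset.mem_coe, Set.mem_singleton_iff]
            exact ⟨he, hee⟩
          have hen1 : e.1 ≠ n := by
            intro h
            exact hnochildT e.2.1 e.2.2 (by rw [← h]; exact he)
          have hen2 : e.2.2 ≠ n := by
            intro h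
            exact hee (hT.2.2.1 _ he _ heE (by rw [h]))
          rcases hE2 he₁ with hmin | ⟨ht1, ht2⟩
          · left
            rw [mem_EminI_iff] at hmin ⊢
            have hee' : a.1.edge ≠ e := by rw [ha]; exact fun hh => hee hh.symm
            rw [firstEdgeOp_cons_neg hee']
            exact hmin
          · right
            constructor
            · intro hocc
              rcases occursTgt_cons.1 hocc with h | h
              · rw [ha] at h; exact hen1 h.symm
              · exact ht1 h
            · intro hocc
              rcases occursTgt_cons.1 hocc with h | h
              · rw [ha] at h; exact hen2 h.symm
              · exact ht2 h

end Statement3BasicInput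
lemma Op.edge_tgt (o : Op) : o.edge.2.2 = o.tgt := by cases o <;> rfl

/-- If `S` is a consistent QL schedule and `T` a basic input tree of `S`,
then `S[T]` is defined, its edge set is `(E(T) ∪ ADD(S)) − DEL(S)`, and it is a basic
output tree of `S`. -/
theorem apply_on_basic_input (S : QLSchedule) (T : Tree3)
    (hS : ConsistentQL S) (hT : BasicInput S T) :
    ∃ U : Tree3, applyQL S T = some U ∧
      (↑U.E : Set Edge) = ((↑T.E : Set Edge) ∪ ADDs S) \ DELs S ∧
      BasicOutput S U := by
  induction S generalizing T with
  | nil =>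
      refine ⟨T, rfl, ?_, basicOutput_nil T hT.1⟩
      ext e
      simp [mem_ADDs_iff, mem_DELs_iff, lastEdgeOp_nil, Set.mem_diff, Set.mem_union]
  | cons a rest ih =>
      obtain ⟨T₀, hDT₀, hdef₀⟩ := hS
      rw [applyQL_cons] at hdef₀
      obtain ⟨res, hres⟩ := Option.isSome_iff_exists.mp hdef₀
      rw [Option.bind_eq_some_iff] at hres
      obtain ⟨T₁, hh1, hh2⟩ := hres
      have hdef₁ : (applyQL rest T₁).isSome := by rw [hh2]; rfl
      obtain ⟨hDTT, hTN1, hTN2, hTE1, hTE2⟩ := hT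
      cases ha : a.1 with
      | add m l n =>
        rw [ha] at hh1
        obtain ⟨rfl, hnotE₀, hDT₁⟩ := applyOp_add_eq_some hh1
        obtain ⟨-, hN1, hN2, hE1, hE2⟩ := definedOn_basicInput rest _ hDT₁ hdef₁
        -- facts about T
        have hfm : firstNodeOp (a :: rest) m = some a.1 :=
          firstNodeOp_cons_pos (Or.inl (by rw [ha]; rfl))
        have hfn : firstNodeOp (a :: rest) n = some a.1 :=
          firstNodeOp_cons_pos (Or.inr (by rw [ha]; rfl))
        have hmT : m ∈ T.N := by
          have := hTN1 (mem_NminI_iff.2 (Or.inl ⟨l, n, by rw [hfm, ha]⟩))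
          rwa [Finset.mem_coe] at this
        have hnT : n ∉ T.N := by
          intro hn
          exact hTN2 (Finset.mem_coe.2 hn) ⟨m, l, by rw [hfn, ha]⟩
        have hmn : m ≠ n := fun h => hnT (h ▸ hmT)
        have hnotET : (m,l,n) ∉ T.E := fun h => hnT (hDTT.2.1 _ h).2
        have hDT' : IsDT ⟨insert n T.N, insert (m,l,n) T.E, T.root⟩ := isDT_insert hDTT hmT hnT
        have happ : applyOp (Op.add m l n) T =
            some ⟨insert n T.N, insert (m,l,n) T.E, T.root⟩ := by
          rw [applyOp_add_def, if_neg (not_or.2 ⟨hnotET, not_not.2 hDT'⟩)]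
        have hmT₁ : m ∈ (⟨insert n T₀.N, insert (m,l,n) T₀.E, T₀.root⟩ : Tree3).N :=
          (hDT₁.2.1 _ (Finset.mem_insert_self _ _)).1
        have hnT₁ : n ∈ (⟨insert n T₀.N, insert (m,l,n) T₀.E, T₀.root⟩ : Tree3).N :=
          Finset.mem_insert_self _ _
        -- basic input of the tail
        have hBI' : BasicInput rest ⟨insert n T.N, insert (m,l,n) T.E, T.root⟩ := by
          refine ⟨hDT', ?_, ?_, ?_, ?_⟩
          · intro x hx
            simp only [Finset.coe_insert, Set.mem_insert_iff, Finset.mem_coe]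
            by_cases hmem : a.1.src = x ∨ a.1.tgt = x
            · rcases hmem with h | h
              · rw [ha] at h
                have h' : m = x := h
                right; rw [← h']; exact hmT
              · rw [ha] at h
                have h' : n = x := h
                left; exact h'.symm
            · have hfx := firstNodeOp_cons_neg (S := rest) hmem
              have hxS : x ∈ NminI (a :: rest) := by
                rw [mem_NminI_iff, hfx]
                exact mem_NminI_iff.1 hx
              right
              exact Finset.mem_coe.1 (hTN1 hxS)
          · intro x hx
            simp only [Finset.coe_insert, Set.mem_insert_iff, Finset.mem_coe] at hx
            rcases hx with rfl | hx
            · exact hN2 (Finset.mem_coe.2 hnT₁)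
            · by_cases hmem : a.1.src = x ∨ a.1.tgt = x
              · rcases hmem with h | h
                · rw [ha] at h
                  have h' : m = x := h
                  rw [← h']
                  exact hN2 (Finset.mem_coe.2 hmT₁)
                · rw [ha] at h
                  have h' : n = x := h
                  exact absurd (h' ▸ hx) hnT
              · rintro ⟨m', l', h⟩
                exact hTN2 (Finset.mem_coe.2 hx)
                  ⟨m', l', by rw [firstNodeOp_cons_neg (S := rest) hmem]; exact h⟩
          · intro e he
            simp only [Finset.coe_insert, Set.mem_insert_iff, Finset.mem_coe]
            by_cases hee : (m,l,n) = e
            · left; exact hee.symm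
            · right
              have hne : a.1.edge ≠ e := by rw [ha]; exact hee
              have hxS : e ∈ EminI (a :: rest) := by
                rw [mem_EminI_iff, firstEdgeOp_cons_neg (S := rest) hne]
                exact mem_EminI_iff.1 he
              exact Finset.mem_coe.1 (hTE1 hxS)
          · intro e he
            simp only [Finset.coe_insert, Set.mem_insert_iff, Finset.mem_coe] at he
            rcases he with rfl | he
            · exact hE2 (by simp)
            · rcases hTE2 (Finset.mem_coe.2 he) with hmin | ⟨h1, h2⟩
              · left
                rw [mem_EminI_iff] at hmin ⊢
                have hne : a.1.edge ≠ e := by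
                  rw [ha]
                  intro hh
                  rw [← hh] at he
                  exact hnotET he
                rwa [firstEdgeOp_cons_neg (S := rest) hne] at hmin
              · exact Or.inr ⟨fun h => h1 (occursTgt_of_rest h), fun h => h2 (occursTgt_of_rest h)⟩
        obtain ⟨U, hU1, hU2, hU3⟩ := ih _ ⟨_, hDT₁, hdef₁⟩ hBI'
        have happly : applyQL (a :: rest) T = some U := by
          rw [applyQL_cons, ha, happ]
          exact hU1
        refine ⟨U, happly, ?_, ?_⟩
        · -- edge set formula
          rw [hU2]
          ext e
          simp only [Set.mem_diff, Set.mem_union, Finset.coe_insert, Set.mem_insert_iff,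
            Finset.mem_coe]
          by_cases hee : e = (m,l,n)
          · subst hee
            cases hrest : lastEdgeOp rest ((m,l,n) : Edge) with
            | none =>
                have hA : lastEdgeOp (a :: rest) ((m,l,n) : Edge) = some a.1 := by
                  rw [lastEdgeOp_cons_none hrest]
                  exact firstEdgeOp_single_pos (by rw [ha]; rfl)
                have hAS : ((m,l,n) : Edge) ∈ ADDs (a :: rest) := by
                  simp [mem_ADDs_iff, hA, ha]
                have hDS : ((m,l,n) : Edge) ∉ DELs (a :: rest) := by
                  simp [mem_DELs_iff, hA, ha]
                have hDr : ((m,l,n) : Edge) ∉ DELs rest := by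
                  simp [mem_DELs_iff, hrest]
                simp [hAS, hDS, hDr]
            | some o =>
                have hA : lastEdgeOp (a :: rest) ((m,l,n) : Edge) = some o :=
                  lastEdgeOp_cons_some hrest
                rcases lastEdgeOp_some_shape hrest with rfl | rfl
                · have h1 : ((m,l,n) : Edge) ∈ ADDs (a :: rest) := by simp [mem_ADDs_iff, hA]
                  have h2 : ((m,l,n) : Edge) ∈ ADDs rest := by simp [mem_ADDs_iff, hrest]
                  have h3 : ((m,l,n) : Edge) ∉ DELs (a :: rest) := by simp [mem_DELs_iff, hA]
                  have h4 : ((m,l,n) : Edge) ∉ DELs rest := by simp [mem_DELs_iff, hrest]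
                  simp [h1, h2, h3, h4]
                · have h3 : ((m,l,n) : Edge) ∈ DELs (a :: rest) := by simp [mem_DELs_iff, hA]
                  have h4 : ((m,l,n) : Edge) ∈ DELs rest := by simp [mem_DELs_iff, hrest]
                  simp [h3, h4]
          · have hne : a.1.edge ≠ e := by rw [ha]; exact fun hh => hee hh.symm
            have hsame : lastEdgeOp (a :: rest) e = lastEdgeOp rest e := by
              cases hrest : lastEdgeOp rest e with
              | none => rw [lastEdgeOp_cons_none hrest, firstEdgeOp_single_neg hne]
              | some o => rw [lastEdgeOp_cons_some hrest]
            simp only [mem_ADDs_iff, mem_DELs_iff, hsame, hee, false_or]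
        · -- basic output
          obtain ⟨hDTU, hON1, hON2, hOE1, hOE2⟩ := hU3
          refine ⟨hDTU, ?_, ?_, ?_, ?_⟩
          · intro x hx
            rw [mem_NminO_iff] at hx
            cases hrestx : lastNodeOp rest x with
            | some o =>
                have hA : lastNodeOp (a :: rest) x = some o := lastNodeOp_cons_some hrestx
                apply hON1
                rw [mem_NminO_iff]
                rcases hx with ⟨l', n', h⟩ | ⟨l', n', h⟩ | ⟨m', l', h⟩
                · exact Or.inl ⟨l', n', hrestx.trans (hA.symm.trans h)⟩
                · exact Or.inr (Or.inl ⟨l', n', hrestx.trans (hA.symm.trans h)⟩)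
                · exact Or.inr (Or.inr ⟨m', l', hrestx.trans (hA.symm.trans h)⟩)
            | none =>
                have hA : lastNodeOp (a :: rest) x = firstNodeOp [a] x :=
                  lastNodeOp_cons_none hrestx
                by_cases hmem : a.1.src = x ∨ a.1.tgt = x
                · have hA' : lastNodeOp (a :: rest) x = some a.1 := by
                    rw [hA, firstNodeOp_single_pos hmem]
                  have hpres := applyQL_node_pres hU1 (x := x)
                    (fun o ho hh => (lastNodeOp_none_iff.1 hrestx) o ho (Or.inr hh))
                  rw [Finset.mem_coe, hpres]
                  simp only [Finset.mem_insert]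
                  rcases hx with ⟨l', n', h⟩ | ⟨l', n', h⟩ | ⟨m', l', h⟩
                  · rw [hA', ha] at h
                    exact Op.noConfusion (Option.some.inj h)
                  · rw [hA', ha] at h
                    have := Option.some.inj h
                    injection this with e1 e2 e3
                    right; rw [← e1]; exact hmT
                  · rw [hA', ha] at h
                    have := Option.some.inj h
                    injection this with e1 e2 e3
                    left; exact e3.symm
                · rw [hA, firstNodeOp_single_neg hmem] at hx
                  rcases hx with ⟨l', n', h⟩ | ⟨l', n', h⟩ | ⟨m', l', h⟩ <;> cases h
          · intro x hx
            rintro ⟨m', l', h⟩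
            cases hrestx : lastNodeOp rest x with
            | some o =>
                have hA : lastNodeOp (a :: rest) x = some o := lastNodeOp_cons_some hrestx
                exact hON2 hx ⟨m', l', hrestx.trans (hA.symm.trans h)⟩
            | none =>
                have hA : lastNodeOp (a :: rest) x = firstNodeOp [a] x :=
                  lastNodeOp_cons_none hrestx
                by_cases hmem : a.1.src = x ∨ a.1.tgt = x
                · rw [hA, firstNodeOp_single_pos hmem, ha] at h
                  exact Op.noConfusion (Option.some.inj h)
                · rw [hA, firstNodeOp_single_neg hmem] at h
                  cases h
          · intro e he
            rw [mem_EminO_iff] at he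
            cases hreste : lastEdgeOp rest e with
            | some o =>
                have hA : lastEdgeOp (a :: rest) e = some o := lastEdgeOp_cons_some hreste
                apply hOE1
                rw [mem_EminO_iff]
                exact hreste.trans (hA.symm.trans he)
            | none =>
                have hA : lastEdgeOp (a :: rest) e = firstEdgeOp [a] e :=
                  lastEdgeOp_cons_none hreste
                by_cases hmem : a.1.edge = e
                · rw [hA, firstEdgeOp_single_pos hmem, ha] at he
                  have hpres := applyQL_edge_pres hU1 (e := e)
                    (lastEdgeOp_none_iff.1 hreste)
                  rw [Finset.mem_coe, hpres]
                  simp only [Finset.mem_insert]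
                  left
                  rw [ha] at hmem
                  exact hmem.symm
                · rw [hA, firstEdgeOp_single_neg hmem] at he
                  cases he
          · intro e he
            rcases hOE2 he with hmin | ⟨h1, h2⟩
            · left
              rw [mem_EminO_iff] at hmin ⊢
              exact lastEdgeOp_cons_some hmin
            · by_cases htg : a.1.tgt = e.1 ∨ a.1.tgt = e.2.2
              · have hner : ∀ o ∈ ops rest, o.edge ≠ e := by
                  intro o ho hh
                  apply h2
                  refine ⟨o, ho, ?_⟩
                  have h' : o.edge.2.2 = e.2.2 := congrArg (fun q => q.2.2) hh
                  rw [Op.edge_tgt] at h'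
                  exact h'
                have hpres := applyQL_edge_pres hU1 hner
                have heT' : e ∈ (⟨insert n T.N, insert (m,l,n) T.E, T.root⟩ : Tree3).E := by
                  rw [← hpres]
                  exact Finset.mem_coe.1 he
                simp only [Finset.mem_insert] at heT'
                rcases heT' with rfl | heT
                · left
                  rw [mem_EminO_iff]
                  have hnone : lastEdgeOp rest (m,l,n) = none := lastEdgeOp_none_iff.2 hner
                  rw [lastEdgeOp_cons_none hnone, firstEdgeOp_single_pos (by rw [ha]; rfl), ha]
                · exfalso
                  rw [ha] at htg
                  rcases htg with h | h
                  · exact hnT (by rw [show n = e.1 from h]; exact (hDTT.2.1 _ heT).1)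
                  · exact hnT (by rw [show n = e.2.2 from h]; exact (hDTT.2.1 _ heT).2)
              · right
                constructor
                · intro h
                  rcases occursTgt_cons.1 h with hh | hh
                  · exact htg (Or.inl hh)
                  · exact h1 hh
                · intro h
                  rcases occursTgt_cons.1 h with hh | hh
                  · exact htg (Or.inr hh)
                  · exact h2 hh
      | del m l n =>
        rw [ha] at hh1
        obtain ⟨rfl, heE₀, hDT₁⟩ := applyOp_del_eq_some hh1
        obtain ⟨-, hN1, hN2, hE1, hE2⟩ := definedOn_basicInput rest _ hDT₁ hdef₁
        have hfe : firstEdgeOp (a :: rest) ((m,l,n) : Edge) = some a.1 :=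
          firstEdgeOp_cons_pos (by rw [ha]; rfl)
        have he₀T : (m,l,n) ∈ T.E := by
          have := hTE1 (mem_EminI_iff.2 (by rw [hfe, ha]))
          rwa [Finset.mem_coe] at this
        have hmn : m ≠ n := no_self_loop hDTT he₀T
        have hmT : m ∈ T.N := (hDTT.2.1 _ he₀T).1
        have hoccn : occursTgt (a :: rest) n :=
          ⟨a.1, by rw [ops_cons]; exact List.mem_cons_self, by rw [ha]; rfl⟩
        have hnochildT : ∀ l' p, (n,l',p) ∉ T.E := by
          intro l' p hp
          rcases hTE2 (Finset.mem_coe.2 hp) with hmin | ⟨h1, h2⟩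
          · rw [mem_EminI_iff] at hmin
            have hne : a.1.edge ≠ ((n,l',p) : Edge) := by
              rw [ha]
              intro hh
              have hh' : (m,l,n) = ((n,l',p) : Edge) := hh
              injection hh' with e1 e2
              exact hmn e1
            rw [firstEdgeOp_cons_neg (S := rest) hne] at hmin
            have hmem₁ := hE1 (mem_EminI_iff.2 hmin)
            rw [Finset.mem_coe] at hmem₁
            have hend := (hDT₁.2.1 _ hmem₁).1
            exact absurd rfl (Finset.mem_erase.mp hend).1
          · exact h1 hoccn
        have hDT' : IsDT ⟨T.N.erase n, T.E.erase (m,l,n), T.root⟩ :=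
          isDT_erase hDTT he₀T hnochildT
        have happ : applyOp (Op.del m l n) T =
            some ⟨T.N.erase n, T.E.erase (m,l,n), T.root⟩ := by
          rw [applyOp_del_def, if_neg (not_or.2 ⟨not_not.2 he₀T, not_not.2 hDT'⟩)]
        have hmT₁ : m ∈ T₀.N.erase n :=
          Finset.mem_erase.2 ⟨no_self_loop hDT₀ heE₀, (hDT₀.2.1 _ heE₀).1⟩
        have hBI' : BasicInput rest ⟨T.N.erase n, T.E.erase (m,l,n), T.root⟩ := by
          refine ⟨hDT', ?_, ?_, ?_, ?_⟩
          · intro x hx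
            simp only [Finset.coe_erase, Set.mem_diff, Finset.mem_coe, Set.mem_singleton_iff]
            by_cases hmem : a.1.src = x ∨ a.1.tgt = x
            · rcases hmem with h | h
              · rw [ha] at h
                have h' : m = x := h
                rw [← h']
                exact ⟨hmT, hmn⟩
              · rw [ha] at h
                have h' : n = x := h
                exfalso
                have hx₁ := hN1 hx
                rw [← h', Finset.mem_coe] at hx₁
                exact absurd rfl (Finset.mem_erase.mp hx₁).1
            · have hfx := firstNodeOp_cons_neg (S := rest) hmem
              have hxS : x ∈ NminI (a :: rest) := by
                rw [mem_NminI_iff, hfx]; exact mem_NminI_iff.1 hx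
              refine ⟨Finset.mem_coe.1 (hTN1 hxS), ?_⟩
              intro hh
              exact hmem (Or.inr (by rw [ha]; exact hh.symm))
          · intro x hx
            simp only [Finset.coe_erase, Set.mem_diff, Finset.mem_coe, Set.mem_singleton_iff] at hx
            obtain ⟨hxT, hxn⟩ := hx
            rintro ⟨m', l', h⟩
            by_cases hmem : a.1.src = x ∨ a.1.tgt = x
            · rcases hmem with hsrc | htgt
              · rw [ha] at hsrc
                have h' : m = x := hsrc
                subst h'
                exact hN2 (Finset.mem_coe.2 hmT₁) ⟨m', l', h⟩
              · rw [ha] at htgt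
                have h' : n = x := htgt
                exact hxn h'.symm
            · have hfx := firstNodeOp_cons_neg (S := rest) hmem
              exact hTN2 (Finset.mem_coe.2 hxT) ⟨m', l', by rw [hfx]; exact h⟩
          · intro e he
            rw [mem_EminI_iff] at he
            have heT₁ := hE1 (mem_EminI_iff.2 he)
            rw [Finset.mem_coe] at heT₁
            obtain ⟨hne, -⟩ := Finset.mem_erase.mp heT₁
            have hne' : a.1.edge ≠ e := by rw [ha]; exact fun hh => hne hh.symm
            have heS : e ∈ EminI (a :: rest) := by
              rw [mem_EminI_iff, firstEdgeOp_cons_neg (S := rest) hne']; exact he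
            have heTE := hTE1 heS
            rw [Finset.mem_coe] at heTE
            simp only [Finset.coe_erase, Set.mem_diff, Finset.mem_coe, Set.mem_singleton_iff]
            exact ⟨heTE, hne⟩
          · intro e he
            simp only [Finset.coe_erase, Set.mem_diff, Finset.mem_coe,
              Set.mem_singleton_iff] at he
            obtain ⟨heT, hne⟩ := he
            rcases hTE2 (Finset.mem_coe.2 heT) with hmin | ⟨h1, h2⟩
            · left
              rw [mem_EminI_iff] at hmin ⊢
              have hne' : a.1.edge ≠ e := by rw [ha]; exact fun hh => hne hh.symm
              rwa [firstEdgeOp_cons_neg (S := rest) hne'] at hmin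
            · exact Or.inr ⟨fun h => h1 (occursTgt_of_rest h), fun h => h2 (occursTgt_of_rest h)⟩
        obtain ⟨U, hU1, hU2, hU3⟩ := ih _ ⟨_, hDT₁, hdef₁⟩ hBI'
        have happly : applyQL (a :: rest) T = some U := by
          rw [applyQL_cons, ha, happ]
          exact hU1
        refine ⟨U, happly, ?_, ?_⟩
        · rw [hU2]
          ext e
          simp only [Set.mem_diff, Set.mem_union, Finset.coe_erase, Set.mem_singleton_iff,
            Finset.mem_coe]
          by_cases hee : e = (m,l,n)
          · subst hee
            cases hrest : lastEdgeOp rest ((m,l,n) : Edge) with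
            | none =>
                have hA : lastEdgeOp (a :: rest) ((m,l,n) : Edge) = some a.1 := by
                  rw [lastEdgeOp_cons_none hrest]
                  exact firstEdgeOp_single_pos (by rw [ha]; rfl)
                have hDS : ((m,l,n) : Edge) ∈ DELs (a :: rest) := by
                  simp [mem_DELs_iff, hA, ha]
                have hAr : ((m,l,n) : Edge) ∉ ADDs rest := by
                  simp [mem_ADDs_iff, hrest]
                simp [hDS, hAr]
            | some o =>
                have hA : lastEdgeOp (a :: rest) ((m,l,n) : Edge) = some o :=
                  lastEdgeOp_cons_some hrest
                rcases lastEdgeOp_some_shape hrest with rfl | rfl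
                · have h1 : ((m,l,n) : Edge) ∈ ADDs (a :: rest) := by simp [mem_ADDs_iff, hA]
                  have h2 : ((m,l,n) : Edge) ∈ ADDs rest := by simp [mem_ADDs_iff, hrest]
                  have h3 : ((m,l,n) : Edge) ∉ DELs (a :: rest) := by simp [mem_DELs_iff, hA]
                  have h4 : ((m,l,n) : Edge) ∉ DELs rest := by simp [mem_DELs_iff, hrest]
                  simp [h1, h2, h3, h4, he₀T]
                · have h3 : ((m,l,n) : Edge) ∈ DELs (a :: rest) := by simp [mem_DELs_iff, hA]
                  have h4 : ((m,l,n) : Edge) ∈ DELs rest := by simp [mem_DELs_iff, hrest]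
                  simp [h3, h4]
          · have hne : a.1.edge ≠ e := by rw [ha]; exact fun hh => hee hh.symm
            have hsame : lastEdgeOp (a :: rest) e = lastEdgeOp rest e := by
              cases hrest : lastEdgeOp rest e with
              | none => rw [lastEdgeOp_cons_none hrest, firstEdgeOp_single_neg hne]
              | some o => rw [lastEdgeOp_cons_some hrest]
            simp only [mem_ADDs_iff, mem_DELs_iff, hsame]
            simp [hee]
        · obtain ⟨hDTU, hON1, hON2, hOE1, hOE2⟩ := hU3
          refine ⟨hDTU, ?_, ?_, ?_, ?_⟩
          · intro x hx
            rw [mem_NminO_iff] at hx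
            cases hrestx : lastNodeOp rest x with
            | some o =>
                have hA : lastNodeOp (a :: rest) x = some o := lastNodeOp_cons_some hrestx
                apply hON1
                rw [mem_NminO_iff]
                rcases hx with ⟨l', n', h⟩ | ⟨l', n', h⟩ | ⟨m', l', h⟩
                · exact Or.inl ⟨l', n', hrestx.trans (hA.symm.trans h)⟩
                · exact Or.inr (Or.inl ⟨l', n', hrestx.trans (hA.symm.trans h)⟩)
                · exact Or.inr (Or.inr ⟨m', l', hrestx.trans (hA.symm.trans h)⟩)
            | none =>
                have hA : lastNodeOp (a :: rest) x = firstNodeOp [a] x :=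
                  lastNodeOp_cons_none hrestx
                by_cases hmem : a.1.src = x ∨ a.1.tgt = x
                · have hA' : lastNodeOp (a :: rest) x = some a.1 := by
                    rw [hA, firstNodeOp_single_pos hmem]
                  have hpres := applyQL_node_pres hU1 (x := x)
                    (fun o ho hh => (lastNodeOp_none_iff.1 hrestx) o ho (Or.inr hh))
                  rw [Finset.mem_coe, hpres]
                  simp only [Finset.mem_erase]
                  rcases hx with ⟨l', n', h⟩ | ⟨l', n', h⟩ | ⟨m', l', h⟩
                  · rw [hA', ha] at h
                    have := Option.some.inj h
                    injection this with e1 e2 e3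
                    rw [← e1]
                    exact ⟨hmn, hmT⟩
                  · rw [hA', ha] at h
                    exact Op.noConfusion (Option.some.inj h)
                  · rw [hA', ha] at h
                    exact Op.noConfusion (Option.some.inj h)
                · rw [hA, firstNodeOp_single_neg hmem] at hx
                  rcases hx with ⟨l', n', h⟩ | ⟨l', n', h⟩ | ⟨m', l', h⟩ <;> cases h
          · intro x hx
            rintro ⟨m', l', h⟩
            cases hrestx : lastNodeOp rest x with
            | some o =>
                have hA : lastNodeOp (a :: rest) x = some o := lastNodeOp_cons_some hrestx
                exact hON2 hx ⟨m', l', hrestx.trans (hA.symm.trans h)⟩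
            | none =>
                have hA : lastNodeOp (a :: rest) x = firstNodeOp [a] x :=
                  lastNodeOp_cons_none hrestx
                by_cases hmem : a.1.src = x ∨ a.1.tgt = x
                · rw [hA, firstNodeOp_single_pos hmem, ha] at h
                  have := Option.some.inj h
                  injection this with e1 e2 e3
                  have hpres := applyQL_node_pres hU1 (x := x)
                    (fun o ho hh => (lastNodeOp_none_iff.1 hrestx) o ho (Or.inr hh))
                  rw [Finset.mem_coe, hpres] at hx
                  simp only [Finset.mem_erase] at hx
                  exact hx.1 e3.symm
                · rw [hA, firstNodeOp_single_neg hmem] at h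
                  cases h
          · intro e he
            rw [mem_EminO_iff] at he
            cases hreste : lastEdgeOp rest e with
            | some o =>
                have hA : lastEdgeOp (a :: rest) e = some o := lastEdgeOp_cons_some hreste
                apply hOE1
                rw [mem_EminO_iff]
                exact hreste.trans (hA.symm.trans he)
            | none =>
                have hA : lastEdgeOp (a :: rest) e = firstEdgeOp [a] e :=
                  lastEdgeOp_cons_none hreste
                by_cases hmem : a.1.edge = e
                · rw [hA, firstEdgeOp_single_pos hmem, ha] at he
                  exact Op.noConfusion (Option.some.inj he)
                · rw [hA, firstEdgeOp_single_neg hmem] at he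
                  cases he
          · intro e he
            rcases hOE2 he with hmin | ⟨h1, h2⟩
            · left
              rw [mem_EminO_iff] at hmin ⊢
              exact lastEdgeOp_cons_some hmin
            · by_cases htg : a.1.tgt = e.1 ∨ a.1.tgt = e.2.2
              · have hner : ∀ o ∈ ops rest, o.edge ≠ e := by
                  intro o ho hh
                  apply h2
                  refine ⟨o, ho, ?_⟩
                  have h' : o.edge.2.2 = e.2.2 := congrArg (fun q => q.2.2) hh
                  rw [Op.edge_tgt] at h'
                  exact h'
                have hpres := applyQL_edge_pres hU1 hner
                have heT' : e ∈ (⟨T.N.erase n, T.E.erase (m,l,n), T.root⟩ : Tree3).E := by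
                  rw [← hpres]
                  exact Finset.mem_coe.1 he
                simp only [Finset.mem_erase] at heT'
                obtain ⟨hneE, heT⟩ := heT'
                exfalso
                rw [ha] at htg
                rcases htg with h | h
                · have hE : (n, e.2.1, e.2.2) = e := by rw [show n = e.1 from h]
                  exact hnochildT e.2.1 e.2.2 (by rw [hE]; exact heT)
                · exact hneE (hDTT.2.2.1 e heT (m,l,n) he₀T (show n = e.2.2 from h).symm)
              · right
                constructor
                · intro h
                  rcases occursTgt_cons.1 h with hh | hh
                  · exact htg (Or.inl hh)
                  · exact h1 hh
                · intro h
                  rcases occursTgt_cons.1 h with hh | hh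
                  · exact htg (Or.inr hh)
                  · exact h2 hh
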